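/- For every integer n ≥ 2, the 2-dimensional subspace of ℓ_{2n}^{2n+2} spanned by the vectors c = (cos(kπ/(n+1)))_{k=0}^{2n+1} and s = (sin(kπ/(n+1)))_{k=0}^{2n+1} is isometric (up to a constant multiple of the norm) to the 2-dimensional Euclidean space: there is a constant c_n > 0 with ‖u₁ c + u₂ s‖_{2n} = c_n (u₁² + u₂²)^{1/2} for all u₁, u₂ ∈ ℝ. -/

import Mathlib

open Finset Complex in
lemma aux (n : ℕ) (hn : 1 ≤ n) (u₁ u₂ : ℝ) :
    ∑ k ∈ Finset.range (2 * n + 2),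
      (u₁ * Real.cos ((k : ℝ) * Real.pi / (n + 1))
        + u₂ * Real.sin ((k : ℝ) * Real.pi / (n + 1))) ^ (2 * n)
    = ((2*n+2) * (2*n).choose n / 4^n : ℝ) * (u₁^2+u₂^2)^n := by
  set θ : ℝ := Real.pi / (n + 1) with hθdef
  have hθ : ∀ k : ℕ, (k : ℝ) * Real.pi / (n+1) = k * θ := by
    intro k; rw [hθdef]; ring
  set z : ℂ := (u₁ : ℂ) - u₂ * I with hz
  set w : ℂ := Complex.exp (θ * I) with hw
  have hwk : ∀ k : ℕ, w ^ k = (Real.cos (k*θ) : ℂ) + (Real.sin (k*θ) : ℂ) * I := by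
    intro k
    rw [hw, ← Complex.exp_nat_mul,
      show ((k:ℂ) * ((θ:ℂ) * I)) = ((k*θ : ℝ):ℂ) * I by push_cast; ring,
      Complex.exp_mul_I, ← Complex.ofReal_cos, ← Complex.ofReal_sin]
  have hterm : ∀ k : ℕ,
      ((u₁ * Real.cos (k*θ) + u₂ * Real.sin (k*θ) : ℝ) : ℂ)
        = (z * w^k + (starRingEnd ℂ) (z * w^k)) / 2 := by
    intro k
    rw [map_mul, hwk, hz]
    simp only [map_add, map_sub, map_mul, Complex.conj_ofReal, Complex.conj_I]
    rw [Complex.ofReal_add, Complex.ofReal_mul, Complex.ofReal_mul]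
    linear_combination ((u₂:ℂ) * ((Real.sin ((k:ℝ)*θ)):ℂ)) * Complex.I_sq
  -- conjugate of w
  have hcw : (starRingEnd ℂ) w = Complex.exp (-((θ:ℂ) * I)) := by
    rw [hw, ← Complex.exp_conj]
    congr 1
    rw [map_mul, Complex.conj_ofReal, Complex.conj_I]
    ring
  have h2θ : (2*(n:ℝ)+2) * θ = 2*Real.pi := by
    rw [hθdef]; field_simp
  -- the geometric sums
  have hgeom : ∀ j ∈ Finset.range (2*n+1),
      (∑ k ∈ Finset.range (2*n+2), (w^j * ((starRingEnd ℂ) w)^(2*n-j))^k)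
        = if j = n then (2*(n:ℂ)+2) else 0 := by
    intro j hj
    have hjle : j ≤ 2*n := by simpa using Nat.lt_succ_iff.mp (Finset.mem_range.mp hj)
    have hζform : w^j * ((starRingEnd ℂ) w)^(2*n-j)
        = Complex.exp ((2*((j:ℂ) - n)) * ((θ:ℂ)*I)) := by
      rw [hw, hcw, ← Complex.exp_nat_mul, ← Complex.exp_nat_mul, ← Complex.exp_add]
      congr 1
      have : ((2*n-j : ℕ) : ℂ) = 2*(n:ℂ) - j := by
        push_cast [Nat.cast_sub hjle]; ring
      rw [this]; ring
    by_cases hjn : j = n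
    · subst hjn
      rw [hζform]
      norm_num [Complex.exp_zero]
    · have hζN : (w^j * ((starRingEnd ℂ) w)^(2*n-j))^(2*n+2) = 1 := by
        rw [hζform, ← Complex.exp_nat_mul]
        have : ((2*n+2 : ℕ):ℂ) * ((2*((j:ℂ) - n)) * ((θ:ℂ)*I))
            = ((2*((j:ℤ)-n) : ℤ) : ℂ) * (2*(Real.pi:ℂ)*I) := by
          have hc : ((2*(n:ℝ)+2) * θ : ℝ) = ((2*Real.pi : ℝ)) := h2θ
          have hc' : (2*(n:ℂ)+2) * (θ:ℂ) = 2*(Real.pi:ℂ) := by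
            exact_mod_cast congrArg (Complex.ofReal) hc
          push_cast
          linear_combination (2*((j:ℂ)-n)*I) * hc'
        rw [this, Complex.exp_int_mul_two_pi_mul_I]
      have hζ1 : w^j * ((starRingEnd ℂ) w)^(2*n-j) ≠ 1 := by
        rw [hζform, Ne, Complex.exp_eq_one_iff]
        rintro ⟨l, hl⟩
        have hπ : (Real.pi : ℂ) ≠ 0 := by exact_mod_cast Real.pi_ne_zero
        have hIl : ((2*((j:ℝ)-n)*θ : ℝ) : ℂ) * I = ((2*(l:ℝ)*Real.pi : ℝ) : ℂ) * I := by
          push_cast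
          linear_combination hl
        have hreal : (2*((j:ℝ)-n)*θ : ℝ) = 2*(l:ℝ)*Real.pi := by
          have := mul_right_cancel₀ Complex.I_ne_zero hIl
          exact_mod_cast this
        rw [hθdef] at hreal
        have hn1 : ((n:ℝ)+1) ≠ 0 := by positivity
        have : ((j:ℝ) - n) = (l:ℝ)*((n:ℝ)+1) := by
          field_simp at hreal
          have h2π : (2*Real.pi : ℝ) ≠ 0 := by positivity
          apply mul_left_cancel₀ h2π
          linear_combination (2*Real.pi) * hreal
        have hint : (j:ℤ) - n = l*((n:ℤ)+1) := by exact_mod_cast this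
        have hjℤ : (j:ℤ) ≤ 2*n := by exact_mod_cast hjle
        have hjn' : (j:ℤ) ≠ n := by exact_mod_cast hjn
        have hn' : (1:ℤ) ≤ n := by exact_mod_cast hn
        have hj0 : (0:ℤ) ≤ j := Int.natCast_nonneg j
        rcases lt_trichotomy l 0 with h|h|h
        · have h1 : (j:ℤ) - n ≤ -((n:ℤ)+1) := by rw [hint]; nlinarith
          omega
        · rw [h] at hint; simp at hint; omega
        · have h1 : ((n:ℤ)+1) ≤ (j:ℤ) - n := by rw [hint]; nlinarith
          omega
      rw [if_neg hjn, geom_sum_eq hζ1, hζN]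
      simp
  -- binomial expansion + geometric sums
  have hnum : ∑ k ∈ Finset.range (2*n+2), (z * w^k + (starRingEnd ℂ) (z * w^k))^(2*n)
      = z^n * ((starRingEnd ℂ) z)^n * ((2*n).choose n : ℂ) * (2*(n:ℂ)+2) := by
    have hfac : ∀ j k : ℕ,
        (z * w^k)^j * ((starRingEnd ℂ) (z * w^k))^(2*n-j) * ((2*n).choose j : ℂ)
          = z^j * ((starRingEnd ℂ) z)^(2*n-j) * ((2*n).choose j : ℂ)
              * (w^j * ((starRingEnd ℂ) w)^(2*n-j))^k := by
      intro j k
      rw [map_mul, map_pow, mul_pow, mul_pow, mul_pow, pow_right_comm w k j,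
        pow_right_comm ((starRingEnd ℂ) w) k (2*n-j)]
      ring
    calc ∑ k ∈ Finset.range (2*n+2), (z * w^k + (starRingEnd ℂ) (z * w^k))^(2*n)
        = ∑ k ∈ Finset.range (2*n+2), ∑ j ∈ Finset.range (2*n+1),
            (z * w^k)^j * ((starRingEnd ℂ) (z * w^k))^(2*n-j) * ((2*n).choose j : ℂ) := by
          exact Finset.sum_congr rfl fun k _ => add_pow _ _ _
      _ = ∑ j ∈ Finset.range (2*n+1), ∑ k ∈ Finset.range (2*n+2),
            (z * w^k)^j * ((starRingEnd ℂ) (z * w^k))^(2*n-j) * ((2*n).choose j : ℂ) :=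
          Finset.sum_comm
      _ = ∑ j ∈ Finset.range (2*n+1),
            z^j * ((starRingEnd ℂ) z)^(2*n-j) * ((2*n).choose j : ℂ)
              * ∑ k ∈ Finset.range (2*n+2), (w^j * ((starRingEnd ℂ) w)^(2*n-j))^k := by
          refine Finset.sum_congr rfl fun j _ => ?_
          simp only [hfac]
          rw [← Finset.mul_sum]
      _ = ∑ j ∈ Finset.range (2*n+1),
            (if j = n then z^j * ((starRingEnd ℂ) z)^(2*n-j) * ((2*n).choose j : ℂ)
              * (2*(n:ℂ)+2) else 0) := by
          refine Finset.sum_congr rfl fun j hj => ?_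
          rw [hgeom j hj, mul_ite, mul_zero]
      _ = z^n * ((starRingEnd ℂ) z)^(2*n-n) * ((2*n).choose n : ℂ) * (2*(n:ℂ)+2) := by
          rw [Finset.sum_ite_eq' (Finset.range (2*n+1)) n, if_pos]
          simp only [Finset.mem_range]; omega
      _ = z^n * ((starRingEnd ℂ) z)^n * ((2*n).choose n : ℂ) * (2*(n:ℂ)+2) := by
          rw [show 2*n - n = n by omega]
  have hcz : (starRingEnd ℂ) z = (u₁ : ℂ) + u₂ * I := by
    rw [hz, map_sub, map_mul, Complex.conj_ofReal, Complex.conj_ofReal, Complex.conj_I]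
    ring
  have hnz : z * (starRingEnd ℂ) z = ((u₁^2 + u₂^2 : ℝ) : ℂ) := by
    rw [hz, hcz]
    push_cast
    linear_combination (-(u₂:ℂ)^2) * Complex.I_sq
  have key : ((∑ k ∈ Finset.range (2*n+2),
      (u₁ * Real.cos (k*θ) + u₂ * Real.sin (k*θ)) ^ (2*n) : ℝ) : ℂ)
      = (((2*n+2) * (2*n).choose n / 4^n : ℝ) : ℂ) * (((u₁^2+u₂^2 : ℝ)) : ℂ)^n := by
    rw [Complex.ofReal_sum]
    simp only [Complex.ofReal_pow, hterm, div_pow]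
    rw [← Finset.sum_div, hnum,
      show z^n * ((starRingEnd ℂ) z)^n = (((u₁^2+u₂^2 : ℝ)):ℂ)^n by rw [← mul_pow, hnz],
      show ((2:ℂ))^(2*n) = 4^n by rw [pow_mul]; norm_num]
    push_cast
    have h4 : ((4:ℂ))^n ≠ 0 := pow_ne_zero _ (by norm_num)
    field_simp
  have hgoal : ∑ k ∈ Finset.range (2 * n + 2),
      (u₁ * Real.cos ((k : ℝ) * Real.pi / (n + 1))
        + u₂ * Real.sin ((k : ℝ) * Real.pi / (n + 1))) ^ (2 * n)
      = ∑ k ∈ Finset.range (2*n+2),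
        (u₁ * Real.cos (k*θ) + u₂ * Real.sin (k*θ)) ^ (2*n) := by
    refine Finset.sum_congr rfl fun k _ => ?_
    rw [hθ k]
  rw [hgoal]
  exact_mod_cast key

/-- For `n ≥ 2`, the 2-dimensional subspace of `ℓ_{2n}^{2n+2}` spanned by
`c = (cos (kπ/(n+1)))_k` and `s = (sin (kπ/(n+1)))_k` is, up to a constant multiple of the
norm, isometric to 2-dimensional Euclidean space:
`‖u₁ c + u₂ s‖_{2n} = c_n √(u₁² + u₂²)` for some constant `c_n > 0`. -/
theorem stmt_9 (n : ℕ) (hn : 2 ≤ n) :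
    ∃ c : ℝ, 0 < c ∧ ∀ u₁ u₂ : ℝ,
      ((∑ k ∈ Finset.range (2 * n + 2),
          |u₁ * Real.cos ((k : ℝ) * Real.pi / (n + 1))
            + u₂ * Real.sin ((k : ℝ) * Real.pi / (n + 1))| ^ (2 * n) : ℝ)
        ^ ((2 * n : ℝ))⁻¹)
      = c * Real.sqrt (u₁ ^ 2 + u₂ ^ 2) := by
  have hKpos : 0 < ((2*n+2) * (2*n).choose n / 4^n : ℝ) := by
    have h1 : 0 < ((2*n).choose n : ℝ) := by
      exact_mod_cast Nat.choose_pos (by omega : n ≤ 2*n)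
    positivity
  refine ⟨((2*n+2) * (2*n).choose n / 4^n : ℝ) ^ ((2*(n:ℝ)))⁻¹,
    Real.rpow_pos_of_pos hKpos _, fun u₁ u₂ => ?_⟩
  have heven : ∀ a : ℝ, |a| ^ (2*n) = a ^ (2*n) := fun a => (even_two_mul n).pow_abs a
  simp only [heven]
  rw [aux n (by omega) u₁ u₂]
  set r := Real.sqrt (u₁^2+u₂^2) with hr
  have hrnn : 0 ≤ r := Real.sqrt_nonneg _
  have hr2 : u₁^2+u₂^2 = r^(2:ℕ) := (Real.sq_sqrt (by positivity)).symm
  rw [hr2, ← pow_mul]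
  rw [Real.mul_rpow hKpos.le (by positivity)]
  congr 1
  rw [show ((2*(n:ℝ)))⁻¹ = (((2*n : ℕ) : ℝ))⁻¹ by push_cast; ring]
  exact Real.pow_rpow_inv_natCast hrnn (by omega)
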